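/- Let E be a finite set and φ : {0,1}^E → 2^E a map such that [0,1]^E = ⊎_{O⃗∈{0,1}^E} hoc(O⃗, φ(O⃗)) (a half-open decomposition of the cube). Then the same holds for the complementary map φ* defined by φ*(O⃗) = E \ φ(O⃗): that is, [0,1]^E = ⊎_{O⃗∈{0,1}^E} hoc(O⃗, φ*(O⃗)). -/

import Mathlib

open Classical in
noncomputable def hoc {ι : Type*} (O : ι → Bool) (S : Set ι) : Set (ι → ℝ) :=
  {x | ∀ e, if e ∈ S then
        (if O e then x e ∈ Set.Ioc (0:ℝ) 1 else x e ∈ Set.Ico (0:ℝ) 1)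
      else x e = (if O e then 1 else 0)}

open Classical in
lemma mem_hoc_iff {ι : Type*} (O : ι → Bool) (S : Set ι) (x : ι → ℝ)
    (hx : ∀ e, 0 ≤ x e ∧ x e ≤ 1) :
    x ∈ hoc O S ↔ ∀ e, ((x e ≠ 0 ∧ x e ≠ 1) → e ∈ S) ∧
      (¬(x e ≠ 0 ∧ x e ≠ 1) → O e = decide (x e = 1)) := by
  unfold hoc
  simp only [Set.mem_setOf_eq]
  refine forall_congr' fun e => ?_
  obtain ⟨h0, h1⟩ := hx e
  have hfr : ¬(x e ≠ 0 ∧ x e ≠ 1) ↔ (x e = 0 ∨ x e = 1) := by tauto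
  have hne : (0:ℝ) ≠ 1 := by norm_num
  by_cases hS : e ∈ S
  · rw [if_pos hS]
    cases hOe : O e
    · simp only [Bool.false_eq_true, if_false, Set.mem_Ico, hfr]
      constructor
      · rintro ⟨-, hlt⟩
        refine ⟨fun _ => hS, fun hc => ?_⟩
        rcases hc with hc | hc
        · simp [hc]
        · exact absurd hc (by linarith)
      · rintro ⟨-, h2⟩
        refine ⟨h0, ?_⟩
        rcases lt_or_eq_of_le h1 with hlt | heq
        · exact hlt
        · exact absurd (h2 (Or.inr heq)).symm (by simp [heq])
    · simp only [if_true, Set.mem_Ioc, hfr]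
      constructor
      · rintro ⟨hlt, -⟩
        refine ⟨fun _ => hS, fun hc => ?_⟩
        rcases hc with hc | hc
        · exact absurd hc (by linarith)
        · simp [hc]
      · rintro ⟨-, h2⟩
        refine ⟨?_, h1⟩
        rcases lt_or_eq_of_le h0 with hlt | heq
        · exact hlt
        · exact absurd (h2 (Or.inl heq.symm)).symm (by simp [← heq])
  · rw [if_neg hS]
    cases hOe : O e
    · simp only [Bool.false_eq_true, if_false, hfr]
      constructor
      · intro hxe
        exact ⟨fun hc => absurd hxe hc.1, fun _ => by simp [hxe]⟩
      · rintro ⟨hf, h2⟩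
        by_contra hxe0
        have : x e = 1 := by
          rcases (not_and_or.mp (fun hc => hS (hf hc))) with hc | hc
          · exact absurd (not_not.mp hc) hxe0
          · exact not_not.mp hc
        exact absurd (h2 (Or.inr this)).symm (by simp [this])
    · simp only [if_true, hfr]
      constructor
      · intro hxe
        exact ⟨fun hc => absurd hxe hc.2, fun _ => by simp [hxe]⟩
      · rintro ⟨hf, h2⟩
        by_contra hxe1
        have : x e = 0 := by
          rcases (not_and_or.mp (fun hc => hS (hf hc))) with hc | hc
          · exact not_not.mp hc
          · exact absurd (not_not.mp hc) hxe1
        exact absurd (h2 (Or.inl this)).symm (by simp [this])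

set_option maxHeartbeats 1000000 in
open Classical Finset in
theorem stmt_19 (ι : Type*) [Fintype ι] (φ : (ι → Bool) → Set ι)
    (h : ∀ x : ι → ℝ, (∀ e, 0 ≤ x e ∧ x e ≤ 1) → ∃! O : ι → Bool, x ∈ hoc O (φ O)) :
    ∀ x : ι → ℝ, (∀ e, 0 ≤ x e ∧ x e ≤ 1) → ∃! O : ι → Bool, x ∈ hoc O ((φ O)ᶜ) := by
  classical
  intro x hx
  set b : ι → Bool := fun e => decide (x e = 1) with hb
  -- key: unique covering of each face of the cube determined by (G, c)
  have key : ∀ (G : Finset ι), (∀ e ∈ G, x e ≠ 0 ∧ x e ≠ 1) → ∀ c : ι → Bool,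
      ∃! O : ι → Bool, (∀ e ∈ G, e ∈ φ O) ∧ (∀ e ∉ G, O e = c e) := by
    intro G hG c
    set y : ι → ℝ := fun e => if e ∈ G then x e else (if c e then 1 else 0) with hy
    have hyb : ∀ e, 0 ≤ y e ∧ y e ≤ 1 := by
      intro e; by_cases he : e ∈ G
      · simpa [hy, he] using hx e
      · by_cases hc : c e <;> simp [hy, he, hc]
    have ha : ∀ e ∈ G, y e ≠ 0 ∧ y e ≠ 1 := by
      intro e he; simpa [hy, he] using hG e he
    have hbn : ∀ e ∉ G, ¬(y e ≠ 0 ∧ y e ≠ 1) ∧ decide (y e = 1) = c e := by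
      intro e he; by_cases hc : c e <;> simp [hy, he, hc]
    have equiv : ∀ O : ι → Bool, (y ∈ hoc O (φ O)) ↔
        ((∀ e ∈ G, e ∈ φ O) ∧ (∀ e ∉ G, O e = c e)) := by
      intro O
      rw [mem_hoc_iff O (φ O) y hyb]
      constructor
      · intro hAll
        refine ⟨fun e he => (hAll e).1 (ha e he), fun e he => ?_⟩
        rw [(hAll e).2 (hbn e he).1, (hbn e he).2]
      · rintro ⟨P1, P2⟩ e
        by_cases he : e ∈ G
        · exact ⟨fun _ => P1 e he, fun hn => absurd (ha e he) hn⟩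
        · exact ⟨fun hf => absurd hf (hbn e he).1,
            fun _ => by rw [P2 e he, (hbn e he).2]⟩
    exact (existsUnique_congr equiv).mp (h y hyb)
  set F : Finset ι := Finset.univ.filter (fun e => x e ≠ 0 ∧ x e ≠ 1) with hF
  have hmemF : ∀ e, e ∈ F ↔ (x e ≠ 0 ∧ x e ≠ 1) := by
    intro e; simp [hF]
  set SO : (ι → Bool) → Finset ι := fun O => F.filter (fun e => e ∈ φ O) with hSO
  set A : Finset (ι → Bool) := Finset.univ.filter (fun O => ∀ e ∉ F, O e = b e) with hA
  have hmemA : ∀ O, O ∈ A ↔ (∀ e ∉ F, O e = b e) := by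
    intro O; simp [hA]
  -- reduce the goal predicate
  have goal_iff : ∀ O : ι → Bool, (x ∈ hoc O ((φ O)ᶜ)) ↔ (O ∈ A ∧ SO O = ∅) := by
    intro O
    rw [mem_hoc_iff O _ x hx]
    constructor
    · intro hAll
      refine ⟨(hmemA O).mpr fun e he => (hAll e).2 (by simpa using (hmemF e).not.mp he), ?_⟩
      rw [hSO, Finset.filter_eq_empty_iff]
      intro e heF
      exact (hAll e).1 ((hmemF e).mp heF)
    · rintro ⟨hOA, hSOe⟩ e
      constructor
      · intro hfr
        have heF : e ∈ F := (hmemF e).mpr hfr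
        have := Finset.filter_eq_empty_iff.mp hSOe heF
        exact this
      · intro hnfr
        exact (hmemA O).mp hOA e ((hmemF e).not.mpr (by simpa using hnfr))
  -- the face sets
  set C : Finset ι → Finset (ι → Bool) := fun G =>
    Finset.univ.filter (fun c => (∀ e ∉ F, c e = b e) ∧ ∀ e ∈ G, c e = false) with hC
  have cardC : ∀ G : Finset ι, G ⊆ F → (C G).card = 2 ^ ((F \ G).card) := by
    intro G hGF
    rw [← Finset.card_powerset]
    apply Finset.card_nbij' (i := fun c => (F \ G).filter (fun e => c e = true))
      (j := fun T => fun e => if e ∈ F \ G then decide (e ∈ T) else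
        if e ∈ G then false else b e)
    · intro c _; rw [Finset.mem_coe, Finset.mem_powerset]; exact Finset.filter_subset _ _
    · intro T hT
      simp only [hC, Finset.mem_coe, Finset.mem_filter, Finset.mem_univ, true_and]
      constructor
      · intro e he
        have h1 : e ∉ F \ G := fun hc => he (Finset.mem_sdiff.mp hc).1
        have h2 : e ∉ G := fun hc => he (hGF hc)
        simp [h1, h2]
      · intro e he
        have h1 : e ∉ F \ G := by simp [he]
        simp [h1, he]
    · intro c hc
      simp only [hC, Finset.mem_coe, Finset.mem_filter, Finset.mem_univ, true_and] at hc
      dsimp only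
      funext e
      by_cases h1 : e ∈ F \ G
      · simp only [if_pos h1, Finset.mem_filter, h1, true_and]
        cases hce : c e <;> simp
      · rw [if_neg h1]
        by_cases h2 : e ∈ G
        · rw [if_pos h2, (hc.2 e h2)]
        · rw [if_neg h2]
          have : e ∉ F := fun hc2 => h1 (Finset.mem_sdiff.mpr ⟨hc2, h2⟩)
          rw [hc.1 e this]
    · intro T hT
      rw [Finset.mem_coe, Finset.mem_powerset] at hT
      ext e
      simp only [Finset.mem_filter]
      constructor
      · rintro ⟨h1, h2⟩
        rw [if_pos h1] at h2
        simpa using h2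
      · intro he
        have h1 : e ∈ F \ G := hT he
        exact ⟨h1, by simp [h1, he]⟩
  -- the cover function
  set cover : Finset ι → (ι → Bool) → (ι → Bool) := fun G c =>
    if hG : ∀ e ∈ G, x e ≠ 0 ∧ x e ≠ 1 then (key G hG c).choose else c with hcover
  have cover_spec : ∀ (G : Finset ι), (∀ e ∈ G, x e ≠ 0 ∧ x e ≠ 1) → ∀ c : ι → Bool,
      ((∀ e ∈ G, e ∈ φ (cover G c)) ∧ (∀ e ∉ G, cover G c e = c e)) ∧
      (∀ O' : ι → Bool, ((∀ e ∈ G, e ∈ φ O') ∧ (∀ e ∉ G, O' e = c e)) → O' = cover G c) := by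
    intro G hG c
    rw [hcover]
    simp only [dif_pos hG]
    exact ⟨(key G hG c).choose_spec.1, (key G hG c).choose_spec.2⟩
  -- key counting identity
  have hcard : ((A.filter (fun O => SO O = ∅)).card : ℤ) = 1 := by
    calc ((A.filter (fun O => SO O = ∅)).card : ℤ)
        = ∑ O ∈ A, if SO O = ∅ then (1 : ℤ) else 0 := by
          rw [Finset.sum_boole]
      _ = ∑ O ∈ A, ∑ G ∈ (SO O).powerset, (-1 : ℤ) ^ G.card := by
          refine Finset.sum_congr rfl fun O _ => ?_
          rw [Finset.sum_powerset_neg_one_pow_card]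
      _ = ∑ p ∈ A.sigma (fun O => (SO O).powerset), (-1 : ℤ) ^ p.2.card :=
          Finset.sum_sigma' A (fun O => (SO O).powerset) (fun _ G => (-1 : ℤ) ^ G.card)
      _ = ∑ q ∈ F.powerset.sigma (fun G => C G), (-1 : ℤ) ^ q.1.card := by
          refine Finset.sum_nbij'
            (i := fun p => ⟨p.2, fun e => if e ∈ p.2 then false else p.1 e⟩)
            (j := fun q => ⟨cover q.1 q.2, q.1⟩) ?_ ?_ ?_ ?_ ?_
          · rintro ⟨O, G⟩ hp
            dsimp only
            rw [Finset.mem_sigma] at hp ⊢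
            dsimp only at hp ⊢
            obtain ⟨hOA, hG⟩ := hp
            rw [Finset.mem_powerset] at hG
            have hGF : G ⊆ F := hG.trans (Finset.filter_subset _ _)
            refine ⟨Finset.mem_powerset.mpr hGF, ?_⟩
            simp only [hC, Finset.mem_filter, Finset.mem_univ, true_and]
            constructor
            · intro e he
              have heg : e ∉ G := fun hc => he (hGF hc)
              rw [if_neg heg]
              exact (hmemA O).mp hOA e he
            · intro e he; rw [if_pos he]
          · rintro ⟨G, c⟩ hq
            dsimp only
            rw [Finset.mem_sigma] at hq ⊢
            dsimp only at hq ⊢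
            obtain ⟨hGF, hcC⟩ := hq
            rw [Finset.mem_powerset] at hGF
            have hG : ∀ e ∈ G, x e ≠ 0 ∧ x e ≠ 1 := fun e he => (hmemF e).mp (hGF he)
            obtain ⟨⟨hc1, hc2⟩, _⟩ := cover_spec G hG c
            simp only [hC, Finset.mem_filter, Finset.mem_univ, true_and] at hcC
            constructor
            · rw [hmemA]
              intro e he
              rw [hc2 e (fun hc => he (hGF hc)), hcC.1 e he]
            · rw [Finset.mem_powerset]
              intro e he
              rw [hSO, Finset.mem_filter]
              exact ⟨hGF he, hc1 e he⟩
          · rintro ⟨O, G⟩ hp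
            dsimp only
            rw [Finset.mem_sigma, Finset.mem_powerset] at hp
            obtain ⟨hOA, hG⟩ := hp
            have hGF : G ⊆ F := hG.trans (Finset.filter_subset _ _)
            have hGfr : ∀ e ∈ G, x e ≠ 0 ∧ x e ≠ 1 := fun e he => (hmemF e).mp (hGF he)
            obtain ⟨-, huniq⟩ := cover_spec G hGfr (fun e => if e ∈ G then false else O e)
            have : O = cover G (fun e => if e ∈ G then false else O e) := by
              refine huniq O ⟨?_, ?_⟩
              · intro e he
                have := hG he
                rw [hSO, Finset.mem_filter] at this
                exact this.2
              · intro e he; rw [if_neg he]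
            simp only [← this]
          · rintro ⟨G, c⟩ hq
            dsimp only
            rw [Finset.mem_sigma, Finset.mem_powerset] at hq
            obtain ⟨hGF, hcC⟩ := hq
            simp only [hC, Finset.mem_filter, Finset.mem_univ, true_and] at hcC
            have hG : ∀ e ∈ G, x e ≠ 0 ∧ x e ≠ 1 := fun e he => (hmemF e).mp (hGF he)
            obtain ⟨⟨hc1, hc2⟩, -⟩ := cover_spec G hG c
            have : (fun e => if e ∈ G then false else cover G c e) = c := by
              funext e
              by_cases he : e ∈ G
              · rw [if_pos he, hcC.2 e he]
              · rw [if_neg he, hc2 e he]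
            simp only [this]
          · rintro ⟨O, G⟩ _; rfl
      _ = ∑ G ∈ F.powerset, ∑ c ∈ C G, (-1 : ℤ) ^ G.card :=
          (Finset.sum_sigma' F.powerset (fun G => C G) (fun G _ => (-1 : ℤ) ^ G.card)).symm
      _ = ∑ G ∈ F.powerset, (∏ e ∈ G, (-1 : ℤ)) * ∏ e ∈ F \ G, (2 : ℤ) := by
          refine Finset.sum_congr rfl fun G hG => ?_
          rw [Finset.sum_const, cardC G (Finset.mem_powerset.mp hG),
            Finset.prod_const, Finset.prod_const, nsmul_eq_mul]
          push_cast
          ring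
      _ = ∏ e ∈ F, ((-1 : ℤ) + 2) := (Finset.prod_add _ _ _).symm
      _ = 1 := by simp
  have hcard' : (A.filter (fun O => SO O = ∅)).card = 1 := by exact_mod_cast hcard
  obtain ⟨O₀, hO₀⟩ := Finset.card_eq_one.mp hcard'
  have hmem : ∀ O, O ∈ A.filter (fun O => SO O = ∅) ↔ O = O₀ := by
    intro O; rw [hO₀]; simp
  refine ⟨O₀, ?_, ?_⟩
  · have := (hmem O₀).mpr rfl
    rw [Finset.mem_filter] at this
    exact (goal_iff O₀).mpr ⟨this.1, this.2⟩
  · intro O' hO'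
    have h2 := (goal_iff O').mp hO'
    exact (hmem O').mp (Finset.mem_filter.mpr ⟨h2.1, h2.2⟩)
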